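/- Let (X_{ij})_{i,j≥1} be a doubly indexed family of i.i.d. complex random variables with E|X_{11}|^{4+ε} < ∞ for some ε ∈ (0, 1/4], and set α = ε/(8+2ε). Under Assumption 1, for each n let Σ(n) = A(n) + n^{-1/2}[B₁x₁, …, B_n x_n] (with [x_j]_i = X_{ij}) and let Σ̂(n) be defined in the same way but with X_{ij} replaced by the truncated variables X̂_{ij,n} = X_{ij}·1{|X_{ij}| ≤ n^{1/2−α}}. Then P( Σ(n) ≠ Σ̂(n) for infinitely many n ) = 0. -/

import Mathlib

/-!
Statement 18 (truncation step: almost surely, Σ(n) coincides with its truncated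
version Σ̂(n) for all but finitely many n).
-/

open MeasureTheory ProbabilityTheory Filter Matrix
open scoped ENNReal NNReal

noncomputable section

/-- Spectral (ℓ²-operator) norm of a complex matrix. -/
noncomputable def specNorm {m n : ℕ} (M : Matrix (Fin m) (Fin n) ℂ) : ℝ :=
  ‖LinearMap.toContinuousLinearMap (Matrix.toEuclideanLin M)‖

/-- Euclidean norm of a complex vector. -/
noncomputable def evNorm {p : ℕ} (v : Fin p → ℂ) : ℝ :=
  Real.sqrt (∑ i, ‖v i‖ ^ 2)

variable {W : Type*}

/-- The double array `(X_{ij})` is i.i.d. -/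
def IIDArray [MeasurableSpace W] (P : Measure W) (X : ℕ → ℕ → W → ℂ) : Prop :=
  (∀ i j, Measurable (X i j)) ∧
    iIndepFun (fun q : ℕ × ℕ => X q.1 q.2) P ∧
    ∀ i j, IdentDistrib (X i j) (X 0 0) P P

/-- The random matrix `Σ(n) = A(n) + n^{-1/2}[B₁x₁, …, B_n x_n]`, with per-`n`
entry array `X n i j` (as needed after truncation). -/
noncomputable def SigmaMatT (p : ℕ → ℕ) (d : (n : ℕ) → Fin n → ℕ)
    (B : (n : ℕ) → (j : Fin n) → Matrix (Fin (p n)) (Fin (d n j)) ℂ)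
    (A : (n : ℕ) → Matrix (Fin (p n)) (Fin n) ℂ)
    (X : ℕ → ℕ → ℕ → W → ℂ) (n : ℕ) (ω : W) : Matrix (Fin (p n)) (Fin n) ℂ :=
  A n + Matrix.of fun a j =>
    (Real.sqrt n : ℂ)⁻¹ * ((B n j).mulVec (fun i => X n (i : ℕ) (j : ℕ) ω) a)

/-- The resolvent `Q(z) = (Σ Σᴴ − z I_p)⁻¹`. -/
noncomputable def QmatT (p : ℕ → ℕ) (d : (n : ℕ) → Fin n → ℕ)
    (B : (n : ℕ) → (j : Fin n) → Matrix (Fin (p n)) (Fin (d n j)) ℂ)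
    (A : (n : ℕ) → Matrix (Fin (p n)) (Fin n) ℂ)
    (X : ℕ → ℕ → ℕ → W → ℂ) (z : ℂ) (n : ℕ) (ω : W) :
    Matrix (Fin (p n)) (Fin (p n)) ℂ :=
  (SigmaMatT p d B A X n ω * (SigmaMatT p d B A X n ω)ᴴ - z • 1)⁻¹

/-- Partial sums of the truncated geometric series `∑ 4^k 1{4^k < y}` are at most `2 max(y,0)`. -/
lemma geom_finsum_le (y : ℝ) (N : ℕ) :
    ∑ k ∈ Finset.range N, (if (4:ℝ)^k < y then (4:ℝ)^k else 0) ≤ 2 * max y 0 := by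
  induction N with
  | zero => simp
  | succ N ih =>
    rw [Finset.sum_range_succ]
    by_cases h : (4:ℝ)^N < y
    · rw [if_pos h]
      have h1 : ∑ k ∈ Finset.range N, (if (4:ℝ)^k < y then (4:ℝ)^k else 0) + (4:ℝ)^N
          ≤ ∑ k ∈ Finset.range (N+1), (4:ℝ)^k := by
        rw [Finset.sum_range_succ]
        gcongr ?_ + _
        apply Finset.sum_le_sum
        intro k _
        split
        · exact le_rfl
        · positivity
      have h2 : ∑ k ∈ Finset.range (N+1), (4:ℝ)^k = ((4:ℝ)^(N+1) - 1)/3 := by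
        rw [geom_sum_eq (by norm_num)]; norm_num
      have hpos : (0:ℝ) < 4^N := by positivity
      have h3 : ((4:ℝ)^(N+1) - 1)/3 ≤ 2 * (4:ℝ)^N := by
        rw [pow_succ]; linarith
      have h4 : (4:ℝ)^N ≤ max y 0 := le_trans h.le (le_max_left _ _)
      linarith
    · rw [if_neg h]; simpa using ih

/-- The truncated geometric series `∑ 4^k 1{4^k < y}` is at most `2 y`. -/
lemma geom_tsum_le (y : ℝ) :
    ∑' k : ℕ, ENNReal.ofReal (if (4:ℝ)^k < y then (4:ℝ)^k else 0) ≤ 2 * ENNReal.ofReal y := by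
  rw [ENNReal.tsum_eq_iSup_sum]
  refine iSup_le fun s => ?_
  obtain ⟨N, hN⟩ := s.exists_nat_subset_range
  calc ∑ k ∈ s, ENNReal.ofReal (if (4:ℝ)^k < y then (4:ℝ)^k else 0)
      ≤ ∑ k ∈ Finset.range N, ENNReal.ofReal (if (4:ℝ)^k < y then (4:ℝ)^k else 0) :=
        Finset.sum_le_sum_of_subset hN
    _ = ENNReal.ofReal (∑ k ∈ Finset.range N, (if (4:ℝ)^k < y then (4:ℝ)^k else 0)) := by
        rw [ENNReal.ofReal_sum_of_nonneg]
        intro k _; split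
        · positivity
        · exact le_rfl
    _ ≤ ENNReal.ofReal (2 * max y 0) := ENNReal.ofReal_le_ofReal (geom_finsum_le y N)
    _ = 2 * ENNReal.ofReal y := by
        rw [ENNReal.ofReal_mul (by norm_num)]
        congr 1
        · norm_num
        · rcases le_total 0 y with h|h
          · rw [max_eq_left h]
          · rw [max_eq_right h, ENNReal.ofReal_zero,
              (ENNReal.ofReal_eq_zero.mpr h)]

/-- With `α = ε/(8+2ε)` and `X̂_{ij,n} = X_{ij} 1{|X_{ij}| ≤ n^{1/2−α}}`,
the event `{Σ(n) ≠ Σ̂(n) for infinitely many n}` has probability `0`. -/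
theorem truncation_eventually_equal
    [MeasurableSpace W] (P : Measure W) [IsProbabilityMeasure P]
    (p : ℕ → ℕ) (d : (n : ℕ) → Fin n → ℕ)
    (B : (n : ℕ) → (j : Fin n) → Matrix (Fin (p n)) (Fin (d n j)) ℂ)
    (A : (n : ℕ) → Matrix (Fin (p n)) (Fin n) ℂ)
    (X : ℕ → ℕ → W → ℂ)
    (hiid : IIDArray P X)
    (ε : ℝ) (hε0 : 0 < ε) (hε1 : ε ≤ 1 / 4)
    (hmom : Integrable (fun ω => ‖X 0 0 ω‖ ^ (4 + ε)) P)
    -- Assumption 1: proportional growth of dimensions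
    (c₁ C₁ : ℝ) (hc₁ : 0 < c₁)
    (hd : ∀ᶠ n in atTop, ∀ j : Fin n, c₁ ≤ (d n j : ℝ) / n ∧ (d n j : ℝ) / n ≤ C₁)
    (hp : ∀ᶠ n in atTop, c₁ ≤ (p n : ℝ) / n ∧ (p n : ℝ) / n ≤ C₁) :
    P {ω | ∃ᶠ n in atTop,
        SigmaMatT p d B A (fun _ i j => X i j) n ω ≠
          SigmaMatT p d B A
            (fun n i j ω' =>
              if ‖X i j ω'‖ ≤ (n : ℝ) ^ ((1 : ℝ) / 2 - ε / (8 + 2 * ε)) then X i j ω' else 0)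
            n ω} = 0 := by
  classical
  obtain ⟨hmeas, hindep, hid⟩ := hiid
  set c : ℝ := (1:ℝ)/2 - ε/(8+2*ε) with hc_def
  have h4ε : (0:ℝ) < 4 + ε := by linarith
  have hc_eq : c = 2/(4+ε) := by rw [hc_def]; field_simp; ring
  have hcpos : 0 < c := by rw [hc_eq]; positivity
  have hce : c * (4+ε) = 2 := by rw [hc_eq]; field_simp
  set D : ℕ := ⌈C₁⌉₊ with hD
  set t : ℕ → ℝ := fun k => ((2:ℝ)^k) ^ c with ht
  set S : ℕ → ℕ → ℕ → Set W := fun k i j => {ω | t k < ‖X i j ω‖} with hS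
  set F : ℕ → Set W := fun k =>
    ⋃ i ∈ Finset.range (D * 2^(k+1)), ⋃ j ∈ Finset.range (2^(k+1)), S k i j with hF
  -- measurability
  have hSm : ∀ k i j, MeasurableSet (S k i j) := fun k i j =>
    measurableSet_lt measurable_const (hmeas i j).norm
  have hSid : ∀ k i j, P (S k i j) = P (S k 0 0) := by
    intro k i j
    have hs : MeasurableSet {z : ℂ | t k < ‖z‖} :=
      measurableSet_lt measurable_const measurable_norm
    exact (hid i j).measure_mem_eq hs
  -- the exponent computation: (t k)^(4+ε) = 4^k
  have htk : ∀ k : ℕ, (t k) ^ (4+ε) = (4:ℝ)^k := by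
    intro k
    have hb : (0:ℝ) ≤ (2:ℝ)^k := by positivity
    simp only [ht]
    rw [← Real.rpow_mul hb, hce]
    rw [show (2:ℝ) = ((2:ℕ):ℝ) by norm_num, Real.rpow_natCast, ← pow_mul, mul_comm k 2, pow_mul]
    norm_num
  -- the basic integral
  set I : ℝ≥0∞ := ∫⁻ ω, ENNReal.ofReal (‖X 0 0 ω‖ ^ (4+ε)) ∂P with hI_def
  have hI : I < ⊤ := by
    have h2 := hmom.2
    rw [hasFiniteIntegral_def] at h2
    have : I = ∫⁻ ω, (‖‖X 0 0 ω‖ ^ (4+ε)‖ₑ : ℝ≥0∞) ∂P := by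
      apply lintegral_congr
      intro ω
      rw [Real.enorm_eq_ofReal (Real.rpow_nonneg (norm_nonneg _) _)]
    rwa [this]
  -- the key series bound
  have hsum1 : ∑' k, (4:ℝ≥0∞)^k * P (S k 0 0) ≤ 2 * I := by
    have e1 : ∀ k, (4:ℝ≥0∞)^k * P (S k 0 0)
        = ∫⁻ ω, (S k 0 0).indicator (fun _ => (4:ℝ≥0∞)^k) ω ∂P :=
      fun k => (lintegral_indicator_const (hSm k 0 0) _).symm
    calc ∑' k, (4:ℝ≥0∞)^k * P (S k 0 0)
        = ∑' k, ∫⁻ ω, (S k 0 0).indicator (fun _ => (4:ℝ≥0∞)^k) ω ∂P := by simp_rw [e1]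
      _ = ∫⁻ ω, ∑' k, (S k 0 0).indicator (fun _ => (4:ℝ≥0∞)^k) ω ∂P :=
          (lintegral_tsum fun k => (measurable_const.indicator (hSm k 0 0)).aemeasurable).symm
      _ ≤ ∫⁻ ω, 2 * ENNReal.ofReal (‖X 0 0 ω‖ ^ (4+ε)) ∂P := by
          apply lintegral_mono
          intro ω
          have hptw : ∀ k, (S k 0 0).indicator (fun _ => (4:ℝ≥0∞)^k) ω
              = ENNReal.ofReal (if (4:ℝ)^k < ‖X 0 0 ω‖ ^ (4+ε) then (4:ℝ)^k else 0) := by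
            intro k
            rw [Set.indicator_apply]
            have hmem : ω ∈ S k 0 0 ↔ (4:ℝ)^k < ‖X 0 0 ω‖ ^ (4+ε) := by
              show t k < ‖X 0 0 ω‖ ↔ _
              rw [← Real.rpow_lt_rpow_iff
                (by simp only [ht]; positivity) (norm_nonneg _) h4ε, htk k]
            by_cases h : ω ∈ S k 0 0
            · rw [if_pos h, if_pos (hmem.mp h)]
              rw [ENNReal.ofReal_pow (by norm_num)]
              norm_num
            · rw [if_neg h, if_neg (fun hh => h (hmem.mpr hh)), ENNReal.ofReal_zero]
          simp_rw [hptw]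
          exact geom_tsum_le _
      _ = 2 * I := by
          rw [hI_def, lintegral_const_mul]
          exact ENNReal.measurable_ofReal.comp ((hmeas 0 0).norm.pow_const _)
  -- bound on P (F k)
  have hcard : ∀ k : ℕ, ((D * 2^(k+1) * 2^(k+1) : ℕ) : ℝ≥0∞) = (D:ℝ≥0∞) * 4 * 4^k := by
    intro k
    have h2 : (2:ℝ≥0∞)^(k+1) * 2^(k+1) = 4 * 4^k := by
      rw [show ((4:ℝ≥0∞)) = 2*2 by norm_num, mul_pow, pow_succ]
      ring
    push_cast
    rw [mul_assoc, h2]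
    ring
  have hFk : ∀ k, P (F k) ≤ ((D:ℝ≥0∞) * 4) * ((4:ℝ≥0∞)^k * P (S k 0 0)) := by
    intro k
    calc P (F k) ≤ ∑ i ∈ Finset.range (D * 2^(k+1)),
            P (⋃ j ∈ Finset.range (2^(k+1)), S k i j) :=
          measure_biUnion_finset_le _ _
      _ ≤ ∑ i ∈ Finset.range (D * 2^(k+1)), ∑ j ∈ Finset.range (2^(k+1)), P (S k i j) :=
          Finset.sum_le_sum fun i _ => measure_biUnion_finset_le _ _
      _ = ((D * 2^(k+1) * 2^(k+1) : ℕ) : ℝ≥0∞) * P (S k 0 0) := by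
          simp_rw [hSid]
          simp [Finset.sum_const, mul_assoc]
      _ = ((D:ℝ≥0∞) * 4) * ((4:ℝ≥0∞)^k * P (S k 0 0)) := by
          rw [hcard k]; ring
  -- Borel-Cantelli
  have hBC : P (limsup F atTop) = 0 := by
    apply measure_limsup_atTop_eq_zero
    have hle : ∑' k, P (F k) ≤ ((D:ℝ≥0∞) * 4) * (2 * I) := by
      calc ∑' k, P (F k)
          ≤ ∑' k, ((D:ℝ≥0∞) * 4) * ((4:ℝ≥0∞)^k * P (S k 0 0)) := ENNReal.tsum_le_tsum hFk
        _ = ((D:ℝ≥0∞) * 4) * ∑' k, (4:ℝ≥0∞)^k * P (S k 0 0) := ENNReal.tsum_mul_left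
        _ ≤ ((D:ℝ≥0∞) * 4) * (2 * I) := mul_le_mul_right hsum1 _
    refine (lt_of_le_of_lt hle ?_).ne
    apply ENNReal.mul_lt_top
    · exact ENNReal.mul_lt_top (ENNReal.natCast_lt_top D) (by norm_num)
    · exact ENNReal.mul_lt_top (by norm_num) hI
  -- the matrices coincide when all entries are small
  have key : ∀ n (ω : W), (∀ (j : Fin n) (i : Fin (d n j)), ‖X (i:ℕ) (j:ℕ) ω‖ ≤ (n:ℝ)^c) →
      SigmaMatT p d B A (fun _ i j => X i j) n ω =
      SigmaMatT p d B A
        (fun n i j ω' => if ‖X i j ω'‖ ≤ (n:ℝ)^c then X i j ω' else 0) n ω := by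
    intro n ω h
    unfold SigmaMatT
    congr 1
    ext a j
    simp only [Matrix.of_apply]
    congr 2
    funext i
    exact (if_pos (h j i)).symm
  -- the inclusion into the limsup
  refine measure_mono_null ?_ hBC
  intro ω hω
  rw [Filter.mem_limsup_iff_frequently_mem, frequently_atTop]
  intro k₀
  obtain ⟨N₁, hN₁⟩ := eventually_atTop.mp hd
  simp only [Set.mem_setOf_eq] at hω
  obtain ⟨n, hn, hne⟩ := (frequently_atTop.mp hω) (max (max N₁ 1) (2^k₀))
  have hnN₁ : N₁ ≤ n := le_trans (le_trans (le_max_left _ _) (le_max_left _ _)) hn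
  have hn1 : 1 ≤ n := le_trans (le_trans (le_max_right _ _) (le_max_left _ _)) hn
  have hn2 : 2^k₀ ≤ n := le_trans (le_max_right _ _) hn
  have hbad : ∃ (j : Fin n) (i : Fin (d n j)), (n:ℝ)^c < ‖X (i:ℕ) (j:ℕ) ω‖ := by
    by_contra hcon
    push_neg at hcon
    exact hne (key n ω hcon)
  obtain ⟨j, i, hij⟩ := hbad
  set k := Nat.log 2 n with hk
  have h2k : 2^k ≤ n := Nat.pow_log_le_self 2 (by omega)
  have hk2 : n < 2^(k+1) := Nat.lt_pow_succ_log_self (by norm_num) n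
  refine ⟨k, ?_, ?_⟩
  · have h1 : 2^k₀ < 2^(k+1) := lt_of_le_of_lt hn2 hk2
    have := (Nat.pow_lt_pow_iff_right (by norm_num : 1 < 2)).mp h1
    omega
  · have hdn : d n j ≤ D * n := by
      have h' := (hN₁ n hnN₁ j).2
      have hnpos : (0:ℝ) < n := by exact_mod_cast hn1
      have h'' : (d n j : ℝ) ≤ C₁ * n := by
        rw [div_le_iff₀ hnpos] at h'; exact h'
      have h''' : (d n j : ℝ) ≤ (D:ℝ) * n :=
        le_trans h'' (mul_le_mul_of_nonneg_right (Nat.le_ceil C₁) hnpos.le)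
      exact_mod_cast h'''
    have hiD : (i:ℕ) < D * 2^(k+1) :=
      lt_of_lt_of_le i.2 (le_trans hdn (Nat.mul_le_mul_left D hk2.le))
    have hjk : (j:ℕ) < 2^(k+1) := lt_trans j.2 hk2
    have htle : t k ≤ (n:ℝ)^c := by
      simp only [ht]
      apply Real.rpow_le_rpow (by positivity) ?_ hcpos.le
      exact_mod_cast h2k
    simp only [hF, Set.mem_iUnion, Finset.mem_range]
    exact ⟨i, hiD, j, hjk, lt_of_le_of_lt htle hij⟩

end
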